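/- Let k be a field whose multiplicative group k* has order at least 2n, and let n ≥ m ≥ 1 be integers. Let P ∈ k[X_1, …, X_m] be a homogeneous polynomial of degree n of the form P = Σ_{i=1}^m λ_i X_i^n + Q, where λ_i ≠ 0 for all i and every monomial appearing in Q involves at least two distinct variables. Then there exist pairwise distinct nonzero values k_1, …, k_m ∈ k* such that P(k_1, …, k_m) ≠ 0. -/

import Mathlib

open scoped BigOperators
open MvPolynomial

private lemma degreeOf_prod_le' {k : Type*} [CommRing k] {σ ι : Type*} (v : σ)
    (s : Finset ι) (f : ι → MvPolynomial σ k) :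
    degreeOf v (∏ i ∈ s, f i) ≤ ∑ i ∈ s, degreeOf v (f i) := by
  classical
  induction s using Finset.cons_induction with
  | empty =>
    simp only [Finset.prod_empty, Finset.sum_empty]
    rw [← C_1, degreeOf_C]
  | cons a s ha ih =>
    rw [Finset.prod_cons, Finset.sum_cons]
    exact (degreeOf_mul_le _ _ _).trans (add_le_add le_rfl ih)

private lemma grid_lemma {k : Type*} [Field k] (S : Finset k) :
    ∀ {N : ℕ} (F : MvPolynomial (Fin N) k), F ≠ 0 →
    -- (needs classical)
      (∀ i, F.degreeOf i < S.card) →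
      ∃ x : Fin N → k, (∀ i, x i ∈ S) ∧ eval x F ≠ 0 := by
  classical
  intro N
  induction N with
  | zero =>
    intro F hF _
    obtain ⟨c, rfl⟩ := MvPolynomial.C_surjective (Fin 0) F
    refine ⟨fun i => i.elim0, fun i => i.elim0, ?_⟩
    simpa using fun hc => hF (by simp [hc])
  | succ N IH =>
    intro F hF hdeg
    set φ := finSuccEquiv k N F with hφdef
    have hφ : φ ≠ 0 := fun h => hF (by
      have := (finSuccEquiv k N).injective (by simpa [hφdef] using h)
      simpa using this)
    have hc : φ.leadingCoeff ≠ 0 := Polynomial.leadingCoeff_ne_zero.mpr hφ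
    have hdegc : ∀ j : Fin N, (φ.leadingCoeff).degreeOf j < S.card := fun j =>
      lt_of_le_of_lt (degreeOf_coeff_finSuccEquiv F j _) (hdeg j.succ)
    obtain ⟨r, hrS, hr⟩ := IH _ hc hdegc
    set ψ := φ.map (eval r) with hψdef
    have h0 : ψ.coeff φ.natDegree = eval r φ.leadingCoeff := by
      rw [hψdef, Polynomial.coeff_map]; rfl
    have hψ : ψ ≠ 0 := by
      intro h
      exact hr (by rw [← h0, h, Polynomial.coeff_zero])
    have hψdeg : ψ.natDegree < S.card := by
      refine lt_of_le_of_lt Polynomial.natDegree_map_le ?_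
      rw [hφdef, natDegree_finSuccEquiv]
      exact hdeg 0
    have hx : ∃ x ∈ S, Polynomial.eval x ψ ≠ 0 := by
      by_contra h
      push_neg at h
      have hsub : S ⊆ ψ.roots.toFinset := fun x hx =>
        Multiset.mem_toFinset.mpr ((Polynomial.mem_roots hψ).mpr (h x hx))
      have h1 := Finset.card_le_card hsub
      have h2 : ψ.roots.toFinset.card ≤ ψ.natDegree :=
        (Multiset.toFinset_card_le _).trans (ψ.card_roots' )
      omega
    obtain ⟨x, hxS, hx⟩ := hx
    refine ⟨Fin.cons x r, fun i => Fin.cases hxS hrS i, ?_⟩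
    rwa [eval_eq_eval_mv_eval']

/-- Let `k` be a field with `|kˣ| ≥ 2n` and `n ≥ m ≥ 1`. If
`P = ∑ i, λᵢ Xᵢⁿ + Q` is homogeneous of degree `n` in `m` variables, with all `λᵢ ≠ 0` and
every monomial of `Q` involving at least two distinct variables, then there are pairwise
distinct nonzero values `κ₁, …, κ_m ∈ kˣ` with `P(κ₁, …, κ_m) ≠ 0`. -/
theorem exists_nonvanishing_point {k : Type*} [Field k] {m n : ℕ}
    (hm : 1 ≤ m) (hmn : m ≤ n)
    (hk : 2 * (n : Cardinal) ≤ Cardinal.mk kˣ)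
    (P Q : MvPolynomial (Fin m) k) (lam : Fin m → k)
    (hhom : P.IsHomogeneous n)
    (hP : P = (∑ i : Fin m, C (lam i) * X i ^ n) + Q)
    (hlam : ∀ i, lam i ≠ 0)
    (hQ : ∀ d ∈ Q.support, 2 ≤ d.support.card) :
    ∃ κ : Fin m → k, Function.Injective κ ∧ (∀ i, κ i ≠ 0) ∧ eval κ P ≠ 0 := by
  classical
  have hn0 : n ≠ 0 := by omega
  -- a set of 2n distinct nonzero elements
  obtain ⟨T, hT⟩ := Cardinal.exists_finset_le_card kˣ (2 * n) (by push_cast; exact_mod_cast hk)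
  set S : Finset k := T.image Units.val with hSdef
  have hS : 2 * n ≤ S.card := by
    rw [hSdef, Finset.card_image_of_injective _ Units.val_injective]; exact hT
  have hS0 : ∀ x ∈ S, x ≠ 0 := by
    intro x hx
    obtain ⟨u, -, rfl⟩ := Finset.mem_image.mp hx
    exact u.ne_zero
  -- P ≠ 0
  let i0 : Fin m := ⟨0, hm⟩
  have hcoeff : coeff (Finsupp.single i0 n) P = lam i0 := by
    rw [hP, coeff_add]
    have h2 : coeff (Finsupp.single i0 n) Q = 0 := by
      by_contra h
      have := hQ _ (mem_support_iff.mpr h)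
      rw [Finsupp.support_single_ne_zero _ hn0] at this
      simp at this
    rw [h2, add_zero, coeff_sum]
    simp only [coeff_C_mul, X_pow_eq_monomial, coeff_monomial]
    rw [Finset.sum_eq_single i0]
    · simp
    · intro j _ hj
      rw [if_neg, mul_zero]
      exact fun h => hj ((Finsupp.single_left_inj hn0).mp h)
    · simp
  have hP0 : P ≠ 0 := fun h => hlam i0 (by rw [← hcoeff, h, coeff_zero])
  -- the Vandermonde factor
  set V : MvPolynomial (Fin m) k := ∏ i : Fin m, ∏ j ∈ Finset.Ioi i, (X i - X j) with hVdef
  have hV0 : V ≠ 0 := by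
    rw [hVdef, Finset.prod_ne_zero_iff]
    intro i _
    rw [Finset.prod_ne_zero_iff]
    intro j hj
    exact sub_ne_zero_of_ne (X_injective.ne (Finset.mem_Ioi.mp hj).ne)
  set F : MvPolynomial (Fin m) k := P * V with hFdef
  have hF0 : F ≠ 0 := mul_ne_zero hP0 hV0
  -- degree bounds
  have hdeg : ∀ v : Fin m, F.degreeOf v < S.card := by
    intro v
    have hPd : P.degreeOf v ≤ n := (degreeOf_le_totalDegree P v).trans (hhom.totalDegree_le)
    have hfac : ∀ i j : Fin m, degreeOf v (X i - X j : MvPolynomial (Fin m) k) ≤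
        (if v = i then 1 else 0) + (if v = j then 1 else 0) := by
      intro i j
      rw [degreeOf_le_iff]
      intro d hd
      have hd' := MvPolynomial.support_sub _ _ _ hd
      rw [Finset.mem_union] at hd'
      rcases hd' with hd' | hd' <;>
        · rw [MvPolynomial.support_X] at hd'
          rw [Finset.mem_singleton] at hd'
          subst hd'
          rw [Finsupp.single_apply]
          split_ifs <;> omega
    have hVd : V.degreeOf v ≤ m - 1 := by
      refine (degreeOf_prod_le' v _ _).trans ?_
      have : ∀ i : Fin m, degreeOf v (∏ j ∈ Finset.Ioi i, (X i - X j : MvPolynomial (Fin m) k)) ≤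
          ∑ j ∈ Finset.Ioi i, ((if v = i then 1 else 0) + (if v = j then 1 else 0)) :=
        fun i => (degreeOf_prod_le' v _ _).trans (Finset.sum_le_sum fun j _ => hfac i j)
      refine (Finset.sum_le_sum fun i _ => this i).trans ?_
      have hsum1 : (∑ i : Fin m, ∑ j ∈ Finset.Ioi i, (if v = i then 1 else 0))
          = (Finset.Ioi v).card := by
        have : ∀ i : Fin m, (∑ j ∈ Finset.Ioi i, (if v = i then (1:ℕ) else 0))
            = (if v = i then (Finset.Ioi i).card else 0) := by
          intro i
          rw [Finset.sum_const, smul_eq_mul]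
          split_ifs <;> omega
        simp_rw [this]
        rw [Finset.sum_ite_eq]
        simp
      have hsum2 : (∑ i : Fin m, ∑ j ∈ Finset.Ioi i, (if v = j then 1 else 0))
          = (Finset.Iio v).card := by
        have : ∀ i : Fin m, (∑ j ∈ Finset.Ioi i, (if v = j then (1:ℕ) else 0))
            = (if i < v then 1 else 0) := by
          intro i
          rw [Finset.sum_ite_eq]
          simp [Finset.mem_Ioi]
        simp_rw [this, ← Finset.sum_filter]
        rw [Finset.sum_const, smul_eq_mul, mul_one]
        congr 1
        ext i
        simp [Finset.mem_Iio]
      rw [Finset.sum_congr rfl (fun i _ => Finset.sum_add_distrib), Finset.sum_add_distrib,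
        hsum1, hsum2, Fin.card_Ioi, Fin.card_Iio]
      have hv : (v : ℕ) < m := v.isLt
      omega
    have : F.degreeOf v ≤ n + (m - 1) :=
      (degreeOf_mul_le v P V).trans (add_le_add hPd hVd)
    have hv : (v : ℕ) < m := v.isLt
    omega
  obtain ⟨κ, hκS, hκF⟩ := grid_lemma S F hF0 hdeg
  have hκP : eval κ P ≠ 0 := fun h => hκF (by rw [hFdef, map_mul, h, zero_mul])
  have hκV : eval κ V ≠ 0 := fun h => hκF (by rw [hFdef, map_mul, h, mul_zero])
  have hpair : ∀ i j : Fin m, i < j → κ i ≠ κ j := by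
    intro i j hij
    rw [hVdef, map_prod] at hκV
    have h1 := Finset.prod_ne_zero_iff.mp hκV i (Finset.mem_univ i)
    rw [map_prod] at h1
    have h2 := Finset.prod_ne_zero_iff.mp h1 j (Finset.mem_Ioi.mpr hij)
    rw [map_sub, eval_X, eval_X] at h2
    exact sub_ne_zero.mp h2
  refine ⟨κ, ?_, fun i => hS0 _ (hκS i), hκP⟩
  intro a b hab
  by_contra hne
  rcases lt_or_gt_of_ne hne with h | h
  · exact hpair a b h hab
  · exact hpair b a h hab.symm
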